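/- (Theorem 2(a), primal suboptimality) Let K ≥ 1, let x̃_1, …, x̃_K ∈ X with ergodic average x̄_K = (1/K)·Σ_{k=1}^{K} x̃_k, let λ_0, …, λ_{K+1} ∈ ℝᵖ, let L > 0, E ≥ 0, and let D ⊆ ℝᵖ. Define φ^k(λ) = (L/2)‖λ_k − λ‖² + (1/2)‖λ_{k−1} − λ*‖². Assume: (i) x* ∈ X satisfies Ax* = b and (x*, λ*) is a saddle point of the Lagrangian L(x;λ) = f(x) + ⟨Ax − b, λ⟩, i.e. L(x*;λ) ≤ L(x*;λ*) ≤ L(x;λ*) for all x ∈ X, λ ∈ ℝᵖ; (ii) 0 ∈ D and 2λ* ∈ D; (iii) for every k ∈ {1,…,K} and every λ ∈ D: f(x̃_k) − f(x*) + ⟨λ, r(x̃_k)⟩ ≤ φ^k(λ) − φ^{k+1}(λ) + E. Then −((1/K)·φ^1(2λ*) + E) ≤ f(x̄_K) − f(x*) ≤ (1/K)·φ^1(0) + E. -/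

import Mathlib

open RealInnerProductSpace

/-- Theorem 2(a): primal suboptimality bounds. -/
theorem primal_suboptimality
    (n p : ℕ)
    (A : EuclideanSpace ℝ (Fin n) →ₗ[ℝ] EuclideanSpace ℝ (Fin p))
    (b : EuclideanSpace ℝ (Fin p))
    (f : EuclideanSpace ℝ (Fin n) → ℝ)
    (hf : ConvexOn ℝ Set.univ f)
    (X : Set (EuclideanSpace ℝ (Fin n)))
    (hXne : X.Nonempty) (hXconvex : Convex ℝ X)
    (K : ℕ) (hK : 1 ≤ K)
    (xt : ℕ → EuclideanSpace ℝ (Fin n))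
    (hxt : ∀ k, 1 ≤ k → k ≤ K → xt k ∈ X)
    (lam : ℕ → EuclideanSpace ℝ (Fin p))
    (lamstar : EuclideanSpace ℝ (Fin p))
    (L Econst : ℝ) (hL : 0 < L) (hE : 0 ≤ Econst)
    (D : Set (EuclideanSpace ℝ (Fin p)))
    (φ : ℕ → EuclideanSpace ℝ (Fin p) → ℝ)
    (hφ : ∀ k l,
      φ k l = L / 2 * ‖lam k - l‖ ^ 2 + 1 / 2 * ‖lam (k - 1) - lamstar‖ ^ 2)
    -- (i) primal feasible optimum and saddle point of the Lagrangian
    (xstar : EuclideanSpace ℝ (Fin n)) (hxstarX : xstar ∈ X)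
    (hxstar_feas : A xstar = b)
    (hsaddle_left : ∀ l : EuclideanSpace ℝ (Fin p),
      f xstar + ⟪A xstar - b, l⟫ ≤ f xstar + ⟪A xstar - b, lamstar⟫)
    (hsaddle_right : ∀ x ∈ X,
      f xstar + ⟪A xstar - b, lamstar⟫ ≤ f x + ⟪A x - b, lamstar⟫)
    -- (ii) membership in `D`
    (hzeroD : (0 : EuclideanSpace ℝ (Fin p)) ∈ D)
    (h2lamstarD : (2 : ℝ) • lamstar ∈ D)
    -- (iii) per-iteration inequality
    (hstep : ∀ k, 1 ≤ k → k ≤ K → ∀ l ∈ D,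
      f (xt k) - f xstar + ⟪l, A (xt k) - b⟫ ≤ φ k l - φ (k + 1) l + Econst) :
    -(1 / K * φ 1 ((2 : ℝ) • lamstar) + Econst) ≤
        f ((K : ℝ)⁻¹ • ∑ k ∈ Finset.Icc 1 K, xt k) - f xstar ∧
      f ((K : ℝ)⁻¹ • ∑ k ∈ Finset.Icc 1 K, xt k) - f xstar ≤
        1 / K * φ 1 0 + Econst := by
  have hKpos : (0 : ℝ) < K := by exact_mod_cast Nat.lt_of_lt_of_le Nat.zero_lt_one hK
  set S : Finset ℕ := Finset.Icc 1 K with hS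
  have hcard : S.card = K := by simp [hS]
  set xbar : EuclideanSpace ℝ (Fin n) := (K : ℝ)⁻¹ • ∑ k ∈ S, xt k with hxbar
  -- φ is nonnegative
  have hφnonneg : ∀ k l, 0 ≤ φ k l := by
    intro k l
    rw [hφ]
    positivity
  -- telescoping sum
  have htel : ∀ l : EuclideanSpace ℝ (Fin p),
      ∑ k ∈ S, (φ k l - φ (k + 1) l) = φ 1 l - φ (K + 1) l := by
    intro l
    rw [hS, ← Finset.Ico_add_one_right_eq_Icc, Finset.sum_Ico_eq_sum_range]
    simp only [Nat.add_sub_cancel]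
    have := Finset.sum_range_sub' (fun i => φ (1 + i) l) K
    simpa [add_comm, add_assoc, add_left_comm] using this
  -- membership of xbar in X
  have hwsum : ∑ _k ∈ S, (K : ℝ)⁻¹ = 1 := by
    rw [Finset.sum_const, hcard, nsmul_eq_mul, mul_inv_cancel₀ (ne_of_gt hKpos)]
  have hxbarX : xbar ∈ X := by
    rw [hxbar, Finset.smul_sum]
    refine hXconvex.sum_mem (fun k _ => by positivity) hwsum ?_
    intro k hk
    rw [hS, Finset.mem_Icc] at hk
    exact hxt k hk.1 hk.2
  -- Jensen
  have hjensen : f xbar ≤ (K : ℝ)⁻¹ * ∑ k ∈ S, f (xt k) := by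
    rw [hxbar, Finset.smul_sum, Finset.mul_sum]
    exact hf.map_sum_le (fun k _ => by positivity) hwsum (fun k _ => Set.mem_univ _)
  -- residual of xbar
  have hres : A xbar - b = (K : ℝ)⁻¹ • ∑ k ∈ S, (A (xt k) - b) := by
    rw [hxbar, map_smul, map_sum, Finset.sum_sub_distrib, Finset.sum_const, hcard,
      smul_sub]
    congr 1
    rw [← Nat.cast_smul_eq_nsmul ℝ K b, smul_smul, inv_mul_cancel₀ (ne_of_gt hKpos),
      one_smul]
  -- key inequality
  have key : ∀ l ∈ D, f xbar - f xstar + ⟪l, A xbar - b⟫ ≤ (K : ℝ)⁻¹ * φ 1 l + Econst := by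
    intro l hl
    have hsum : ∑ k ∈ S, (f (xt k) - f xstar + ⟪l, A (xt k) - b⟫) ≤ φ 1 l + K * Econst := by
      calc ∑ k ∈ S, (f (xt k) - f xstar + ⟪l, A (xt k) - b⟫)
          ≤ ∑ k ∈ S, (φ k l - φ (k + 1) l + Econst) := by
            refine Finset.sum_le_sum (fun k hk => ?_)
            rw [hS, Finset.mem_Icc] at hk
            exact hstep k hk.1 hk.2 l hl
        _ = φ 1 l - φ (K + 1) l + K * Econst := by
            rw [Finset.sum_add_distrib, htel, Finset.sum_const, hcard, nsmul_eq_mul]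
        _ ≤ φ 1 l + K * Econst := by
            have := hφnonneg (K + 1) l
            linarith
    have hinner : ⟪l, A xbar - b⟫ = (K : ℝ)⁻¹ * ∑ k ∈ S, ⟪l, A (xt k) - b⟫ := by
      rw [hres, real_inner_smul_right, inner_sum]
    have hexp : ∑ k ∈ S, (f (xt k) - f xstar + ⟪l, A (xt k) - b⟫)
        = (∑ k ∈ S, f (xt k)) - K * f xstar + ∑ k ∈ S, ⟪l, A (xt k) - b⟫ := by
      rw [Finset.sum_add_distrib, Finset.sum_sub_distrib, Finset.sum_const, hcard,
        nsmul_eq_mul]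
    have h1 : f xbar - f xstar + ⟪l, A xbar - b⟫
        ≤ (K : ℝ)⁻¹ * ((∑ k ∈ S, f (xt k)) - K * f xstar + ∑ k ∈ S, ⟪l, A (xt k) - b⟫) := by
      rw [hinner]
      have : (K : ℝ)⁻¹ * (K * f xstar) = f xstar := by
        field_simp
      nlinarith [hjensen]
    calc f xbar - f xstar + ⟪l, A xbar - b⟫
        ≤ (K : ℝ)⁻¹ * (φ 1 l + K * Econst) := by
          refine h1.trans ?_
          rw [← hexp]
          exact mul_le_mul_of_nonneg_left hsum (by positivity)
      _ = (K : ℝ)⁻¹ * φ 1 l + Econst := by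
          field_simp
  -- upper bound
  have hupper : f xbar - f xstar ≤ 1 / K * φ 1 0 + Econst := by
    have := key 0 hzeroD
    simp only [inner_zero_left, add_zero] at this
    rw [one_div]
    linarith
  -- lower bound
  have hlower : -(1 / K * φ 1 ((2 : ℝ) • lamstar) + Econst) ≤ f xbar - f xstar := by
    have h2 := key ((2 : ℝ) • lamstar) h2lamstarD
    rw [real_inner_smul_left] at h2
    have hsad := hsaddle_right xbar hxbarX
    rw [hxstar_feas, sub_self, inner_zero_left, add_zero] at hsad
    rw [real_inner_comm] at hsad
    rw [one_div]
    linarith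
  exact ⟨hlower, hupper⟩
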